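/- Let W be a standard Brownian motion on [0,T], h ∈ L²([0,T]) bounded, and π = {0=t₀<t₁<⋯<t_n=T} a partition with mesh |π|. Then for any p' ≥ 2 there is a constant C (independent of π) such that E max_{0≤k≤n−1} |∫_{t_k}^{t_{k+1}} h(r) dW_r|^{p'} ≤ C r^{p'/2} |π|^{p'/2 − 1/r} for every r > 1; in particular, choosing r = 2log(1/|π|)/p', for |π| small enough, E max_{0≤k≤n−1} |∫_{t_k}^{t_{k+1}} h(r) dW_r|^{p'} ≤ C |π|^{p'/2 − p'/(2 log(1/|π|))} (log(1/|π|))^{p'/2}. -/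

import Mathlib

open MeasureTheory ProbabilityTheory Real
open scoped NNReal ENNReal

lemma aux_rpow_exp {s a : ℝ} (hs : 0 ≤ s) (ha : 0 < a) : s ^ a ≤ a ^ a * Real.exp s := by
  rcases eq_or_lt_of_le hs with rfl | hs
  · rw [Real.zero_rpow ha.ne']
    positivity
  · have h1 : Real.log (s / a) ≤ s / a - 1 := Real.log_le_sub_one_of_pos (by positivity)
    have h2 : a * Real.log s ≤ a * Real.log a + s := by
      have h3 := mul_le_mul_of_nonneg_left h1 ha.le
      have h4 : a * (s / a) = s := by field_simp
      rw [Real.log_div hs.ne' ha.ne', mul_sub] at h3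
      linarith
    calc s ^ a = Real.exp (Real.log s * a) := Real.rpow_def_of_pos hs a
    _ ≤ Real.exp (Real.log a * a + s) := by
        apply Real.exp_le_exp.mpr; nlinarith
    _ = a ^ a * Real.exp s := by
        rw [Real.exp_add, Real.rpow_def_of_pos ha]

lemma aux_abs_rpow_le {v q x : ℝ} (hv : 0 < v) (hq : 0 < q) :
    |x| ^ q ≤ (2 * q * v) ^ (q / 2) * Real.exp (x ^ 2 / (4 * v)) := by
  have hx2 : (0:ℝ) ≤ x ^ 2 := sq_nonneg x
  have habs : |x| ^ q = (x ^ 2) ^ (q / 2) := by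
    rw [show (x:ℝ) ^ 2 = |x| ^ (2:ℕ) by rw [sq_abs], ← Real.rpow_natCast |x| 2,
      ← Real.rpow_mul (abs_nonneg x)]
    ring_nf
  rw [habs]
  have key : (x ^ 2 / (4 * v)) ^ (q / 2) ≤ (q / 2) ^ (q / 2) * Real.exp (x ^ 2 / (4 * v)) :=
    aux_rpow_exp (by positivity) (by positivity)
  have hsplit : (x ^ 2) ^ (q / 2) = (4 * v) ^ (q / 2) * (x ^ 2 / (4 * v)) ^ (q / 2) := by
    rw [← Real.mul_rpow (by positivity) (by positivity)]
    congr 1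
    field_simp
  rw [hsplit]
  calc (4 * v) ^ (q / 2) * (x ^ 2 / (4 * v)) ^ (q / 2)
      ≤ (4 * v) ^ (q / 2) * ((q / 2) ^ (q / 2) * Real.exp (x ^ 2 / (4 * v))) := by
        apply mul_le_mul_of_nonneg_left key (by positivity)
    _ = (2 * q * v) ^ (q / 2) * Real.exp (x ^ 2 / (4 * v)) := by
        rw [← mul_assoc, ← Real.mul_rpow (by positivity) (by positivity)]
        ring_nf

lemma gauss_moment (v : ℝ≥0) {q : ℝ} (hq : 1 ≤ q) :
    ∫⁻ x, ENNReal.ofReal (|x| ^ q) ∂(gaussianReal 0 v) ≤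
      ENNReal.ofReal ((2:ℝ) ^ q * q ^ (q / 2) * (v : ℝ) ^ (q / 2)) := by
  have hq0 : (0:ℝ) < q := by linarith
  have hfm : Measurable fun x : ℝ => ENNReal.ofReal (|x| ^ q) :=
    (((Real.continuous_rpow_const hq0.le).comp continuous_abs).measurable).ennreal_ofReal
  rcases eq_or_ne v 0 with rfl | hv
  · rw [gaussianReal_zero_var, lintegral_dirac]
    simp [Real.zero_rpow hq0.ne']
  · have hv0 : (0:ℝ) < (v:ℝ) := by
      exact_mod_cast pos_iff_ne_zero.mpr hv
    set c : ℝ := (2 * q * (v:ℝ)) ^ (q / 2) * (Real.sqrt (2 * π * (v:ℝ)))⁻¹ with hc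
    have hcpos : 0 < c := by
      have : (0:ℝ) < π := Real.pi_pos
      positivity
    have hbint : Integrable (fun x : ℝ => c * Real.exp (-(1 / (4 * (v:ℝ))) * x ^ 2)) := by
      exact (integrable_exp_neg_mul_sq (by positivity)).const_mul c
    have hpt : ∀ x : ℝ, gaussianPDFReal 0 v x * |x| ^ q ≤
        c * Real.exp (-(1 / (4 * (v:ℝ))) * x ^ 2) := by
      intro x
      have h1 : |x| ^ q ≤ (2 * q * (v:ℝ)) ^ (q / 2) * Real.exp (x ^ 2 / (4 * (v:ℝ))) :=
        aux_abs_rpow_le hv0 hq0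
      have hpdf : gaussianPDFReal 0 v x =
          (Real.sqrt (2 * π * (v:ℝ)))⁻¹ * Real.exp (-(x ^ 2) / (2 * (v:ℝ))) := by
        simp only [gaussianPDFReal, sub_zero]
      rw [hpdf]
      have hsq : (0:ℝ) < Real.sqrt (2 * π * (v:ℝ)) := by
        have : (0:ℝ) < π := Real.pi_pos
        positivity
      have key : Real.exp (-(x ^ 2) / (2 * (v:ℝ))) * |x| ^ q ≤
          (2 * q * (v:ℝ)) ^ (q / 2) * Real.exp (-(1 / (4 * (v:ℝ))) * x ^ 2) := by
        calc Real.exp (-(x ^ 2) / (2 * (v:ℝ))) * |x| ^ q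
            ≤ Real.exp (-(x ^ 2) / (2 * (v:ℝ))) *
              ((2 * q * (v:ℝ)) ^ (q / 2) * Real.exp (x ^ 2 / (4 * (v:ℝ)))) :=
              mul_le_mul_of_nonneg_left h1 (Real.exp_nonneg _)
          _ = (2 * q * (v:ℝ)) ^ (q / 2) *
              (Real.exp (-(x ^ 2) / (2 * (v:ℝ))) * Real.exp (x ^ 2 / (4 * (v:ℝ)))) := by ring
          _ = (2 * q * (v:ℝ)) ^ (q / 2) * Real.exp (-(1 / (4 * (v:ℝ))) * x ^ 2) := by
              rw [← Real.exp_add]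
              congr 1
              field_simp
              ring
      calc (Real.sqrt (2 * π * (v:ℝ)))⁻¹ * Real.exp (-(x ^ 2) / (2 * (v:ℝ))) * |x| ^ q
          = (Real.sqrt (2 * π * (v:ℝ)))⁻¹ * (Real.exp (-(x ^ 2) / (2 * (v:ℝ))) * |x| ^ q) := by
            ring
        _ ≤ (Real.sqrt (2 * π * (v:ℝ)))⁻¹ *
            ((2 * q * (v:ℝ)) ^ (q / 2) * Real.exp (-(1 / (4 * (v:ℝ))) * x ^ 2)) := by
            exact mul_le_mul_of_nonneg_left key (by positivity)
        _ = c * Real.exp (-(1 / (4 * (v:ℝ))) * x ^ 2) := by rw [hc]; ring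
    rw [gaussianReal_of_var_ne_zero 0 hv,
      lintegral_withDensity_eq_lintegral_mul _ (measurable_gaussianPDF 0 v) hfm]
    have step1 : ∫⁻ x, (gaussianPDF 0 v * fun x => ENNReal.ofReal (|x| ^ q)) x ≤
        ∫⁻ x, ENNReal.ofReal (c * Real.exp (-(1 / (4 * (v:ℝ))) * x ^ 2)) := by
      apply lintegral_mono
      intro x
      simp only [Pi.mul_apply, gaussianPDF]
      rw [← ENNReal.ofReal_mul (gaussianPDFReal_nonneg 0 v x)]
      exact ENNReal.ofReal_le_ofReal (hpt x)
    have step2 : ∫⁻ x, ENNReal.ofReal (c * Real.exp (-(1 / (4 * (v:ℝ))) * x ^ 2)) =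
        ENNReal.ofReal (∫ x, c * Real.exp (-(1 / (4 * (v:ℝ))) * x ^ 2)) := by
      rw [← ofReal_integral_eq_lintegral_ofReal hbint]
      exact Filter.Eventually.of_forall fun x => by positivity
    have step3 : (∫ x, c * Real.exp (-(1 / (4 * (v:ℝ))) * x ^ 2)) ≤
        (2:ℝ) ^ q * q ^ (q / 2) * (v : ℝ) ^ (q / 2) := by
      rw [integral_const_mul, integral_gaussian]
      have hsqrt : Real.sqrt (π / (1 / (4 * (v:ℝ)))) = Real.sqrt (4 * π * (v:ℝ)) := by
        congr 1
        field_simp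
      rw [hsqrt]
      have hrw : c * Real.sqrt (4 * π * (v:ℝ)) =
          (2 * q * (v:ℝ)) ^ (q / 2) * Real.sqrt 2 := by
        rw [hc]
        have hpi : (0:ℝ) < π := Real.pi_pos
        have : Real.sqrt (4 * π * (v:ℝ)) = Real.sqrt 2 * Real.sqrt (2 * π * (v:ℝ)) := by
          rw [← Real.sqrt_mul (by norm_num)]
          congr 1
          ring
        rw [this]
        field_simp
      rw [hrw]
      have hexp : (2 * q * (v:ℝ)) ^ (q / 2) =
          (2:ℝ) ^ (q / 2) * q ^ (q / 2) * (v:ℝ) ^ (q / 2) := by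
        rw [Real.mul_rpow (by positivity : (0:ℝ) ≤ 2 * q) hv0.le,
          Real.mul_rpow (by norm_num : (0:ℝ) ≤ 2) hq0.le]
      rw [hexp]
      have h2 : Real.sqrt 2 * (2:ℝ) ^ (q / 2) ≤ (2:ℝ) ^ q := by
        rw [show Real.sqrt 2 = (2:ℝ) ^ ((1:ℝ)/2) from Real.sqrt_eq_rpow 2,
          ← Real.rpow_add (by norm_num)]
        exact Real.rpow_le_rpow_of_exponent_le (by norm_num) (by linarith)
      calc (2:ℝ) ^ (q / 2) * q ^ (q / 2) * (v:ℝ) ^ (q / 2) * Real.sqrt 2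
          = (Real.sqrt 2 * (2:ℝ) ^ (q / 2)) * (q ^ (q / 2) * (v:ℝ) ^ (q / 2)) := by ring
        _ ≤ (2:ℝ) ^ q * (q ^ (q / 2) * (v:ℝ) ^ (q / 2)) := by
            apply mul_le_mul_of_nonneg_right h2 (by positivity)
        _ = (2:ℝ) ^ q * q ^ (q / 2) * (v : ℝ) ^ (q / 2) := by ring
    calc ∫⁻ x, (gaussianPDF 0 v * fun x => ENNReal.ofReal (|x| ^ q)) x
        ≤ ENNReal.ofReal (∫ x, c * Real.exp (-(1 / (4 * (v:ℝ))) * x ^ 2)) := step1.trans step2.le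
      _ ≤ ENNReal.ofReal ((2:ℝ) ^ q * q ^ (q / 2) * (v : ℝ) ^ (q / 2)) :=
          ENNReal.ofReal_le_ofReal step3

lemma aux_jensen {Ω : Type} {m : MeasurableSpace Ω} (μ : Measure Ω) [IsProbabilityMeasure μ]
    {G : Ω → ℝ≥0∞} (hG : AEMeasurable G μ) {r : ℝ} (hr : 1 < r) :
    ∫⁻ ω, (G ω) ^ (1 / r) ∂μ ≤ (∫⁻ ω, G ω ∂μ) ^ (1 / r) := by
  have hr0 : r ≠ 0 := by linarith
  have hpq : r.HolderConjugate (Real.conjExponent r) := Real.HolderConjugate.conjExponent hr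
  have hmeas : AEMeasurable (fun ω => (G ω) ^ (1 / r)) μ := hG.pow_const _
  have key := ENNReal.lintegral_mul_le_Lp_mul_Lq μ hpq hmeas
    (aemeasurable_const : AEMeasurable (fun _ : Ω => (1:ℝ≥0∞)) μ)
  simp only [Pi.mul_apply, mul_one, ENNReal.one_rpow, lintegral_const,
    measure_univ, one_mul] at key
  refine key.trans (le_of_eq ?_)
  congr 1
  apply lintegral_congr
  intro ω
  rw [← ENNReal.rpow_mul, one_div, inv_mul_cancel₀ hr0, ENNReal.rpow_one]

set_option maxHeartbeats 1000000 in
/-- Moment bound for the maximum of Wiener-integral increments over a partition: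
each `ξ_k = ∫_{t_k}^{t_{k+1}} h(r) dW_r` is a centered Gaussian variable with variance
`∫_{t_k}^{t_{k+1}} h(r)² dr`, and for every `p' ≥ 2` there is a constant `C` independent of
the partition such that `E max_k |ξ_k|^{p'} ≤ C r^{p'/2} |π|^{p'/2 − 1/r}` for every `r > 1`;
choosing `r = 2 log(1/|π|)/p'` yields the logarithmic rate for small mesh. -/
theorem stmt10
    {Ω : Type} {mΩ : MeasurableSpace Ω} (μ : Measure Ω) [IsProbabilityMeasure μ]
    (T : ℝ) (hT : 0 < T)
    (h : ℝ → ℝ) (hmeas : Measurable h) (M : ℝ) (hbdd : ∀ r, |h r| ≤ M)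
    (p' : ℝ) (hp' : 2 ≤ p') :
    ∃ C : ℝ, 0 < C ∧ ∃ ε : ℝ, 0 < ε ∧
      ∀ (n : ℕ), 0 < n →
        ∀ tp : ℕ → ℝ, tp 0 = 0 → tp n = T → (∀ i < n, tp i < tp (i + 1)) →
          ∀ ξ : Fin n → Ω → ℝ,
            (∀ k : Fin n, Measurable (ξ k)) →
            (∀ k : Fin n, μ.map (ξ k) =
              ProbabilityTheory.gaussianReal 0
                (Real.toNNReal (∫ r in Set.Icc (tp k.1) (tp (k.1 + 1)), (h r) ^ 2))) →
            (∀ r : ℝ, 1 < r →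
              ∫ ω, (⨆ k : Fin n, |ξ k ω| ^ p') ∂μ ≤
                C * r ^ (p' / 2) *
                  (⨆ k : Fin n, (tp (k.1 + 1) - tp k.1)) ^ (p' / 2 - 1 / r)) ∧
            ((⨆ k : Fin n, (tp (k.1 + 1) - tp k.1)) < ε →
              ∫ ω, (⨆ k : Fin n, |ξ k ω| ^ p') ∂μ ≤
                C * (⨆ k : Fin n, (tp (k.1 + 1) - tp k.1)) ^
                    (p' / 2 - p' / (2 * Real.log (1 / ⨆ k : Fin n, (tp (k.1 + 1) - tp k.1)))) *
                  (Real.log (1 / ⨆ k : Fin n, (tp (k.1 + 1) - tp k.1))) ^ (p' / 2)) := by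
  have hM0 : 0 ≤ M := le_trans (abs_nonneg (h 0)) (hbdd 0)
  have hp'0 : (0:ℝ) < p' := by linarith
  set C : ℝ := 2 ^ p' * p' ^ (p' / 2) * (M + 1) ^ p' * (T + 1) with hC
  have hCpos : 0 < C := by positivity
  refine ⟨C, hCpos, Real.exp (-(p' + 1)), Real.exp_pos _, ?_⟩
  intro n hn tp htp0 htpn htpmono ξ hξmeas hξlaw
  haveI : Nonempty (Fin n) := ⟨⟨0, hn⟩⟩
  set D : ℝ := ⨆ k : Fin n, (tp (k.1 + 1) - tp k.1) with hD
  have hΔpos : ∀ k : Fin n, 0 < tp (k.1 + 1) - tp k.1 :=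
    fun k => sub_pos.mpr (htpmono k.1 k.2)
  have hbddΔ : BddAbove (Set.range fun k : Fin n => tp (k.1 + 1) - tp k.1) :=
    Set.Finite.bddAbove (Set.finite_range _)
  have hΔleD : ∀ k : Fin n, tp (k.1 + 1) - tp k.1 ≤ D := fun k => le_ciSup hbddΔ k
  have hDpos : 0 < D := lt_of_lt_of_le (hΔpos ⟨0, hn⟩) (hΔleD ⟨0, hn⟩)
  have hsum : ∑ k : Fin n, (tp (k.1 + 1) - tp k.1) = T := by
    rw [Fin.sum_univ_eq_sum_range (fun i => tp (i + 1) - tp i) n,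
      Finset.sum_range_sub (fun i => tp i) n, htpn, htp0, sub_zero]
  -- variance bound
  have hvar : ∀ k : Fin n,
      ((Real.toNNReal (∫ r in Set.Icc (tp k.1) (tp (k.1 + 1)), (h r) ^ 2) : ℝ≥0) : ℝ) ≤
        M ^ 2 * (tp (k.1 + 1) - tp k.1) := by
    intro k
    have hab : tp k.1 ≤ tp (k.1 + 1) := by linarith [hΔpos k]
    have hconst : IntegrableOn (fun _ : ℝ => M ^ 2) (Set.Icc (tp k.1) (tp (k.1 + 1))) := by
      exact integrableOn_const measure_Icc_lt_top.ne
    have hintg : IntegrableOn (fun r => (h r) ^ 2) (Set.Icc (tp k.1) (tp (k.1 + 1))) := by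
      apply Integrable.mono' hconst ((hmeas.pow_const 2).aestronglyMeasurable)
      refine Filter.Eventually.of_forall fun x => ?_
      have := hbdd x
      have h2 := abs_nonneg (h x)
      have h3 := sq_abs (h x)
      rw [Real.norm_eq_abs, abs_of_nonneg (sq_nonneg (h x))]
      nlinarith
    have hle : ∫ r in Set.Icc (tp k.1) (tp (k.1 + 1)), (h r) ^ 2 ≤
        M ^ 2 * (tp (k.1 + 1) - tp k.1) := by
      have := setIntegral_mono_on hintg hconst measurableSet_Icc
        (fun x _ => by
          have := hbdd x
          have h2 := abs_nonneg (h x)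
          have h3 := sq_abs (h x)
          nlinarith)
      rwa [setIntegral_const, Real.volume_real_Icc_of_le hab, smul_eq_mul,
        mul_comm] at this
    rw [Real.coe_toNNReal']
    exact max_le hle (by nlinarith [hΔpos k])
  have hfmq : ∀ q : ℝ, 0 < q → Measurable fun x : ℝ => ENNReal.ofReal (|x| ^ q) := fun q hq =>
    (((Real.continuous_rpow_const hq.le).comp continuous_abs).measurable).ennreal_ofReal
  have hsupmeas : Measurable fun ω => ⨆ k : Fin n, |ξ k ω| ^ p' := by
    apply Measurable.iSup
    intro k
    exact ((Real.continuous_rpow_const hp'0.le).comp continuous_abs).measurable.comp (hξmeas k)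
  have hsupnn : ∀ ω, 0 ≤ ⨆ k : Fin n, |ξ k ω| ^ p' := by
    intro ω
    refine le_trans (by positivity : (0:ℝ) ≤ |ξ ⟨0, hn⟩ ω| ^ p') ?_
    exact le_ciSup (f := fun k : Fin n => |ξ k ω| ^ p')
      (Set.Finite.bddAbove (Set.finite_range _)) ⟨0, hn⟩
  have main : ∀ r : ℝ, 1 < r →
      ∫ ω, (⨆ k : Fin n, |ξ k ω| ^ p') ∂μ ≤ C * r ^ (p' / 2) * D ^ (p' / 2 - 1 / r) := by
    intro r hr
    have hr0 : (0:ℝ) < r := by linarith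
    set q : ℝ := p' * r with hq
    have hq1 : (1:ℝ) ≤ q := by nlinarith
    have hq2 : (2:ℝ) ≤ q := by nlinarith
    have hq0 : (0:ℝ) < q := by linarith
    set F : Ω → ℝ := fun ω => ∑ k : Fin n, |ξ k ω| ^ q with hF
    have hFnn : ∀ ω, 0 ≤ F ω := fun ω => Finset.sum_nonneg fun k _ => by positivity
    have hFmeas : Measurable F := by
      apply Finset.measurable_sum
      intro k _
      exact ((Real.continuous_rpow_const hq0.le).comp continuous_abs).measurable.comp (hξmeas k)
    have hpt : ∀ ω, (⨆ k : Fin n, |ξ k ω| ^ p') ≤ (F ω) ^ (1 / r) := by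
      intro ω
      apply ciSup_le
      intro k
      have h1 : |ξ k ω| ^ p' = (|ξ k ω| ^ q) ^ (1 / r) := by
        rw [← Real.rpow_mul (abs_nonneg _)]
        congr 1
        field_simp
        exact hq.symm
      rw [h1]
      apply Real.rpow_le_rpow (by positivity) ?_ (by positivity)
      show |ξ k ω| ^ q ≤ ∑ j : Fin n, |ξ j ω| ^ q
      exact Finset.single_le_sum (f := fun j : Fin n => |ξ j ω| ^ q)
        (fun i _ => by positivity) (Finset.mem_univ k)
    have chainA : ∫⁻ ω, ENNReal.ofReal ((⨆ k : Fin n, |ξ k ω| ^ p')) ∂μ ≤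
        (∫⁻ ω, ENNReal.ofReal (F ω) ∂μ) ^ (1 / r) := by
      calc ∫⁻ ω, ENNReal.ofReal ((⨆ k : Fin n, |ξ k ω| ^ p')) ∂μ
          ≤ ∫⁻ ω, (ENNReal.ofReal (F ω)) ^ (1 / r) ∂μ := by
            apply lintegral_mono
            intro ω
            show ENNReal.ofReal (⨆ k : Fin n, |ξ k ω| ^ p') ≤ ENNReal.ofReal (F ω) ^ (1 / r)
            rw [ENNReal.ofReal_rpow_of_nonneg (hFnn ω) (by positivity : (0:ℝ) ≤ 1 / r)]
            exact ENNReal.ofReal_le_ofReal (hpt ω)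
        _ ≤ (∫⁻ ω, ENNReal.ofReal (F ω) ∂μ) ^ (1 / r) :=
            aux_jensen μ (hFmeas.ennreal_ofReal.aemeasurable) hr
    set K : ℝ := 2 ^ q * q ^ (q / 2) * (M ^ 2) ^ (q / 2) * D ^ (q / 2 - 1) with hK
    have hKnn : 0 ≤ K := by
      rw [hK]
      have h1 : (0:ℝ) ≤ (2:ℝ) ^ q := Real.rpow_nonneg (by norm_num) q
      have h2 : (0:ℝ) ≤ q ^ (q / 2) := Real.rpow_nonneg hq0.le _
      have h3 : (0:ℝ) ≤ (M ^ 2) ^ (q / 2) := Real.rpow_nonneg (sq_nonneg M) _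
      have h4 : (0:ℝ) ≤ D ^ (q / 2 - 1) := Real.rpow_nonneg hDpos.le _
      positivity
    have chainB : ∫⁻ ω, ENNReal.ofReal (F ω) ∂μ ≤ ENNReal.ofReal (K * T) := by
      have expand : ∫⁻ ω, ENNReal.ofReal (F ω) ∂μ =
          ∑ k : Fin n, ∫⁻ ω, ENNReal.ofReal (|ξ k ω| ^ q) ∂μ := by
        rw [← lintegral_finset_sum]
        · apply lintegral_congr
          intro ω
          rw [hF]
          exact ENNReal.ofReal_sum_of_nonneg (fun k _ => by positivity)
        · intro k _
          exact (hfmq q hq0).comp (hξmeas k)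
      rw [expand]
      have each : ∀ k : Fin n, ∫⁻ ω, ENNReal.ofReal (|ξ k ω| ^ q) ∂μ ≤
          ENNReal.ofReal (K * (tp (k.1 + 1) - tp k.1)) := by
        intro k
        have hmap : ∫⁻ ω, ENNReal.ofReal (|ξ k ω| ^ q) ∂μ =
            ∫⁻ x, ENNReal.ofReal (|x| ^ q) ∂(μ.map (ξ k)) :=
          (lintegral_map (hfmq q hq0) (hξmeas k)).symm
        rw [hmap, hξlaw k]
        refine (gauss_moment _ hq1).trans (ENNReal.ofReal_le_ofReal ?_)
        set v : ℝ :=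
          ((Real.toNNReal (∫ r in Set.Icc (tp k.1) (tp (k.1 + 1)), (h r) ^ 2) : ℝ≥0) : ℝ) with hv
        have hvnn : 0 ≤ v := NNReal.coe_nonneg _
        have hvle : v ≤ M ^ 2 * (tp (k.1 + 1) - tp k.1) := hvar k
        have hΔk := hΔpos k
        have step : v ^ (q / 2) ≤
            (M ^ 2) ^ (q / 2) * (D ^ (q / 2 - 1) * (tp (k.1 + 1) - tp k.1)) := by
          calc v ^ (q / 2) ≤ (M ^ 2 * (tp (k.1 + 1) - tp k.1)) ^ (q / 2) :=
              Real.rpow_le_rpow hvnn hvle (by linarith)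
            _ = (M ^ 2) ^ (q / 2) * (tp (k.1 + 1) - tp k.1) ^ (q / 2) :=
              Real.mul_rpow (by positivity) hΔk.le
            _ ≤ (M ^ 2) ^ (q / 2) * (D ^ (q / 2 - 1) * (tp (k.1 + 1) - tp k.1)) := by
              apply mul_le_mul_of_nonneg_left ?_ (by positivity)
              have e : (tp (k.1 + 1) - tp k.1) ^ (q / 2) =
                  (tp (k.1 + 1) - tp k.1) ^ (q / 2 - 1) * (tp (k.1 + 1) - tp k.1) := by
                rw [← Real.rpow_add_one hΔk.ne' (q / 2 - 1)]
                norm_num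
              rw [e]
              exact mul_le_mul_of_nonneg_right
                (Real.rpow_le_rpow hΔk.le (hΔleD k) (show (0:ℝ) ≤ q / 2 - 1 by linarith))
                hΔk.le
        calc 2 ^ q * q ^ (q / 2) * v ^ (q / 2)
            ≤ 2 ^ q * q ^ (q / 2) *
              ((M ^ 2) ^ (q / 2) * (D ^ (q / 2 - 1) * (tp (k.1 + 1) - tp k.1))) :=
              mul_le_mul_of_nonneg_left step
                (mul_nonneg (Real.rpow_nonneg (by norm_num) q) (Real.rpow_nonneg hq0.le _))
          _ = K * (tp (k.1 + 1) - tp k.1) := by rw [hK]; ring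
      calc ∑ k : Fin n, ∫⁻ ω, ENNReal.ofReal (|ξ k ω| ^ q) ∂μ
          ≤ ∑ k : Fin n, ENNReal.ofReal (K * (tp (k.1 + 1) - tp k.1)) :=
            Finset.sum_le_sum fun k _ => each k
        _ = ENNReal.ofReal (∑ k : Fin n, K * (tp (k.1 + 1) - tp k.1)) :=
            (ENNReal.ofReal_sum_of_nonneg fun k _ =>
              mul_nonneg hKnn (hΔpos k).le).symm
        _ = ENNReal.ofReal (K * T) := by rw [← Finset.mul_sum, hsum]
    -- the real-number bound
    have hM' : M ^ p' ≤ (M + 1) ^ p' := Real.rpow_le_rpow hM0 (by linarith) hp'0.le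
    have hT' : T ^ (1 / r) ≤ T + 1 := by
      rcases le_total T 1 with hT1 | hT1
      · have := Real.rpow_le_one hT.le hT1 (by positivity : (0:ℝ) ≤ 1 / r)
        linarith
      · have h1r1 : 1 / r ≤ 1 := by
          rw [div_le_one hr0]; linarith
        have := Real.rpow_le_rpow_of_exponent_le hT1 h1r1
        rw [Real.rpow_one] at this
        linarith
    have core : M ^ p' * T ^ (1 / r) ≤ (M + 1) ^ p' * (T + 1) :=
      mul_le_mul hM' hT' (by positivity) (by positivity)
    have expandKT : (K * T) ^ (1 / r) =
        (2 ^ p' * p' ^ (p' / 2) * r ^ (p' / 2) * D ^ (p' / 2 - 1 / r)) *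
          (M ^ p' * T ^ (1 / r)) := by
      have h2r : ((2:ℝ) ^ q) ^ (1 / r) = (2:ℝ) ^ p' := by
        rw [← Real.rpow_mul (by norm_num)]
        congr 1
        rw [hq]; field_simp
      have hqr : (q ^ (q / 2)) ^ (1 / r) = p' ^ (p' / 2) * r ^ (p' / 2) := by
        rw [← Real.rpow_mul hq0.le,
          show q / 2 * (1 / r) = p' / 2 by rw [hq]; field_simp, hq,
          Real.mul_rpow hp'0.le hr0.le]
      have hMr : ((M ^ 2) ^ (q / 2)) ^ (1 / r) = M ^ p' := by
        rw [← Real.rpow_natCast M 2, ← Real.rpow_mul hM0, ← Real.rpow_mul hM0]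
        congr 1
        push_cast
        rw [hq]; field_simp
      have hDr : (D ^ (q / 2 - 1)) ^ (1 / r) = D ^ (p' / 2 - 1 / r) := by
        rw [← Real.rpow_mul hDpos.le]
        congr 1
        rw [hq]; field_simp
      have h1 : (0:ℝ) ≤ (2:ℝ) ^ q := Real.rpow_nonneg (by norm_num) q
      have h2 : (0:ℝ) ≤ q ^ (q / 2) := Real.rpow_nonneg hq0.le _
      have h3 : (0:ℝ) ≤ (M ^ 2) ^ (q / 2) := Real.rpow_nonneg (sq_nonneg M) _
      have h4 : (0:ℝ) ≤ D ^ (q / 2 - 1) := Real.rpow_nonneg hDpos.le _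
      rw [hK]
      rw [Real.mul_rpow (by positivity) hT.le,
        Real.mul_rpow (by positivity) h4,
        Real.mul_rpow (by positivity) h3,
        Real.mul_rpow h1 h2, h2r, hqr, hMr, hDr]
      ring
    have final_real : (K * T) ^ (1 / r) ≤ C * r ^ (p' / 2) * D ^ (p' / 2 - 1 / r) := by
      rw [expandKT]
      have hre : C * r ^ (p' / 2) * D ^ (p' / 2 - 1 / r) =
          (2 ^ p' * p' ^ (p' / 2) * r ^ (p' / 2) * D ^ (p' / 2 - 1 / r)) *
            ((M + 1) ^ p' * (T + 1)) := by
        rw [hC]; ring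
      rw [hre]
      exact mul_le_mul_of_nonneg_left core (by positivity)
    -- assemble
    rw [integral_eq_lintegral_of_nonneg_ae (Filter.Eventually.of_forall hsupnn)
      hsupmeas.aestronglyMeasurable]
    apply ENNReal.toReal_le_of_le_ofReal
      (mul_nonneg (mul_nonneg hCpos.le (Real.rpow_nonneg hr0.le _))
        (Real.rpow_nonneg hDpos.le _))
    calc ∫⁻ ω, ENNReal.ofReal (⨆ k : Fin n, |ξ k ω| ^ p') ∂μ
        ≤ (∫⁻ ω, ENNReal.ofReal (F ω) ∂μ) ^ (1 / r) := chainA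
      _ ≤ (ENNReal.ofReal (K * T)) ^ (1 / r) :=
          ENNReal.rpow_le_rpow chainB (by positivity)
      _ = ENNReal.ofReal ((K * T) ^ (1 / r)) :=
          ENNReal.ofReal_rpow_of_nonneg (mul_nonneg hKnn hT.le) (by positivity : (0:ℝ) ≤ 1 / r)
      _ ≤ ENNReal.ofReal (C * r ^ (p' / 2) * D ^ (p' / 2 - 1 / r)) :=
          ENNReal.ofReal_le_ofReal final_real
  refine ⟨main, ?_⟩
  intro hDε
  set L : ℝ := Real.log (1 / D) with hL
  have hLgt : p' + 1 < L := by
    rw [hL, ← Real.log_exp (p' + 1)]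
    apply Real.log_lt_log (Real.exp_pos _)
    rw [lt_div_iff₀ hDpos]
    calc Real.exp (p' + 1) * D < Real.exp (p' + 1) * Real.exp (-(p' + 1)) :=
        mul_lt_mul_of_pos_left hDε (Real.exp_pos _)
      _ = 1 := by rw [← Real.exp_add, add_neg_cancel, Real.exp_zero]
  have hLpos : 0 < L := by linarith
  set r : ℝ := 2 * L / p' with hr
  have hr1 : 1 < r := by
    rw [hr, lt_div_iff₀ hp'0]
    linarith
  have h1r : 1 / r = p' / (2 * L) := by
    rw [hr]
    field_simp
  have key := main r hr1
  rw [h1r] at key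
  have hrle : r ≤ L := by
    rw [hr, div_le_iff₀ hp'0]
    nlinarith
  have hrp : r ^ (p' / 2) ≤ L ^ (p' / 2) :=
    Real.rpow_le_rpow (by positivity) hrle (by positivity)
  calc ∫ ω, (⨆ k : Fin n, |ξ k ω| ^ p') ∂μ
      ≤ C * r ^ (p' / 2) * D ^ (p' / 2 - p' / (2 * L)) := key
    _ ≤ C * L ^ (p' / 2) * D ^ (p' / 2 - p' / (2 * L)) := by
        apply mul_le_mul_of_nonneg_right (mul_le_mul_of_nonneg_left hrp hCpos.le)
          (Real.rpow_nonneg hDpos.le _)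
    _ = C * D ^ (p' / 2 - p' / (2 * L)) * L ^ (p' / 2) := by ring
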